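/- Let r > 0 and ε > 0, and define f̂(t) = max{f(v) : 0 ≤ v ≤ t} and ĝ(t) = max{g(v) : 0 ≤ v ≤ t}. If f̂(r) ≤ (εr)^N and ĝ(r) ≤ (εr)^N, then for every (v₁,v₂) ∈ K with ‖(v₁,v₂)‖ = r one has ‖T_λ(v₁,v₂)‖ ≤ 2 ε λ^{1/N} ‖(v₁,v₂)‖. -/

import Mathlib

open Set Filter

/-- Sup norm of a function over `[0,1]`. -/
noncomputable def supNorm (v : ℝ → ℝ) : ℝ :=
  sSup ((fun t => |v t|) '' Icc (0:ℝ) 1)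

/-- Membership in the cone
`K = {(v₁,v₂) : vᵢ ≥ 0 on [0,1], min_{1/4 ≤ t ≤ 3/4} vᵢ(t) ≥ (1/4)‖vᵢ‖_∞, i = 1,2}`
(inside `C([0,1]) × C([0,1])`). -/
def InCone (v₁ v₂ : ℝ → ℝ) : Prop :=
  ContinuousOn v₁ (Icc 0 1) ∧ ContinuousOn v₂ (Icc 0 1) ∧
  (∀ t ∈ Icc (0:ℝ) 1, 0 ≤ v₁ t) ∧ (∀ t ∈ Icc (0:ℝ) 1, 0 ≤ v₂ t) ∧
  (∀ t ∈ Icc (1/4:ℝ) (3/4), (1/4) * supNorm v₁ ≤ v₁ t) ∧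
  (∀ t ∈ Icc (1/4:ℝ) (3/4), (1/4) * supNorm v₂ ≤ v₂ t)

/-- Component of the operator `T_λ`:
`(Tcomp N lam h w) r = ∫_r^1 (λ ∫_0^s N τ^{N-1} h(w(τ)) dτ)^{1/N} ds`;
`T¹_λ(v₁,v₂) = Tcomp N lam f v₂` and `T²_λ(v₁,v₂) = Tcomp N lam g v₁`. -/
noncomputable def Tcomp (N : ℕ) (lam : ℝ) (h : ℝ → ℝ) (w : ℝ → ℝ) : ℝ → ℝ :=
  fun r => ∫ s in r..1, (lam * ∫ τ in (0:ℝ)..s, (N:ℝ) * τ ^ (N - 1) * h (w τ)) ^ ((N:ℝ)⁻¹)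

/-- `Γ = (1/4) ∫_{1/4}^{3/4} (∫_{1/4}^s N τ^{N-1} dτ)^{1/N} ds`. -/
noncomputable def Gam (N : ℕ) : ℝ :=
  (1/4) * ∫ s in (1/4 : ℝ)..(3/4), (∫ τ in (1/4:ℝ)..s, (N:ℝ) * τ ^ (N - 1)) ^ ((N:ℝ)⁻¹)

lemma le_supNorm (v : ℝ → ℝ) (hv : ContinuousOn v (Icc 0 1)) {t : ℝ}
    (ht : t ∈ Icc (0:ℝ) 1) : v t ≤ supNorm v := by
  have hb : BddAbove ((fun t => |v t|) '' Icc (0:ℝ) 1) :=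
    (isCompact_Icc.image_of_continuousOn hv.abs).bddAbove
  exact le_trans (le_abs_self _) (le_csSup hb (mem_image_of_mem _ ht))

lemma supNorm_nonneg (v : ℝ → ℝ) (hv : ContinuousOn v (Icc 0 1)) : 0 ≤ supNorm v := by
  have hb : BddAbove ((fun t => |v t|) '' Icc (0:ℝ) 1) :=
    (isCompact_Icc.image_of_continuousOn hv.abs).bddAbove
  have : |v 0| ≤ supNorm v :=
    le_csSup hb (mem_image_of_mem _ (by constructor <;> norm_num))
  exact le_trans (abs_nonneg _) this

lemma Tcomp_supNorm_le (N : ℕ) (hN : 1 ≤ N) (h w : ℝ → ℝ)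
    (hw : ContinuousOn w (Icc 0 1)) (hwnn : ∀ t ∈ Icc (0:ℝ) 1, 0 ≤ w t)
    (hhc : ContinuousOn h (Ici 0)) (hhnn : ∀ x, 0 ≤ x → 0 ≤ h x)
    (lam : ℝ) (hlam : 0 < lam) (r ε : ℝ) (hr : 0 < r) (hε : 0 < ε)
    (hhat : sSup (h '' Icc (0:ℝ) r) ≤ (ε * r) ^ N)
    (hwle : ∀ t ∈ Icc (0:ℝ) 1, w t ≤ r) :
    supNorm (Tcomp N lam h w) ≤ ε * lam ^ ((N:ℝ)⁻¹) * r := by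
  have hNpos : (0:ℝ) < N := by exact_mod_cast lt_of_lt_of_le Nat.zero_lt_one hN
  set C : ℝ := ε * lam ^ ((N:ℝ)⁻¹) * r with hC
  have hC0 : 0 ≤ C := by positivity
  apply Real.sSup_le _ hC0
  rintro y ⟨t, ht, rfl⟩
  -- bound |Tcomp N lam h w t| ≤ C
  have key : ∀ s ∈ Set.uIoc t (1:ℝ),
      ‖(lam * ∫ τ in (0:ℝ)..s, (N:ℝ) * τ ^ (N - 1) * h (w τ)) ^ ((N:ℝ)⁻¹)‖ ≤ C := by
    intro s hs
    rw [Set.uIoc_of_le ht.2] at hs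
    have hs0 : 0 ≤ s := le_trans ht.1 hs.1.le
    have hs1 : s ≤ 1 := hs.2
    set I : ℝ := ∫ τ in (0:ℝ)..s, (N:ℝ) * τ ^ (N - 1) * h (w τ) with hI
    have hInonneg : 0 ≤ I := by
      apply intervalIntegral.integral_nonneg hs0
      intro τ hτ
      have hτ1 : τ ∈ Icc (0:ℝ) 1 := ⟨hτ.1, le_trans hτ.2 hs1⟩
      have h1 := hhnn (w τ) (hwnn τ hτ1)
      exact mul_nonneg (mul_nonneg (Nat.cast_nonneg N) (pow_nonneg hτ.1 _)) h1
    have hsubset : Icc (0:ℝ) s ⊆ Icc (0:ℝ) 1 := Icc_subset_Icc le_rfl hs1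
    have hctF : ContinuousOn (fun τ => (N:ℝ) * τ ^ (N - 1) * h (w τ)) (Icc 0 s) := by
      apply ContinuousOn.mul
      · exact (continuous_const.mul (continuous_pow _)).continuousOn
      · exact (hhc.comp (hw.mono hsubset) (fun τ hτ => hwnn τ (hsubset hτ)))
    have hint1 : IntervalIntegrable (fun τ => (N:ℝ) * τ ^ (N - 1) * h (w τ))
        MeasureTheory.volume 0 s := by
      apply ContinuousOn.intervalIntegrable
      rwa [Set.uIcc_of_le hs0]
    have hint2 : IntervalIntegrable (fun τ => (ε * r) ^ N * ((N:ℝ) * τ ^ (N - 1)))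
        MeasureTheory.volume 0 s := by
      apply Continuous.intervalIntegrable
      continuity
    have hmono : I ≤ ∫ τ in (0:ℝ)..s, (ε * r) ^ N * ((N:ℝ) * τ ^ (N - 1)) := by
      apply intervalIntegral.integral_mono_on hs0 hint1 hint2
      intro τ hτ
      have hτ1 : τ ∈ Icc (0:ℝ) 1 := hsubset hτ
      have hwτ : w τ ∈ Icc (0:ℝ) r := ⟨hwnn τ hτ1, hwle τ hτ1⟩
      have hb : BddAbove (h '' Icc (0:ℝ) r) :=
        (isCompact_Icc.image_of_continuousOn
          (hhc.mono (fun x hx => hx.1))).bddAbove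
      have hle : h (w τ) ≤ (ε * r) ^ N :=
        le_trans (le_csSup hb (mem_image_of_mem _ hwτ)) hhat
      have hτnn : (0:ℝ) ≤ (N:ℝ) * τ ^ (N - 1) :=
        mul_nonneg (Nat.cast_nonneg N) (pow_nonneg hτ.1 _)
      calc (N:ℝ) * τ ^ (N - 1) * h (w τ) ≤ (N:ℝ) * τ ^ (N - 1) * ((ε * r) ^ N) :=
            mul_le_mul_of_nonneg_left hle hτnn
        _ = (ε * r) ^ N * ((N:ℝ) * τ ^ (N - 1)) := by ring
    have hcalc : (∫ τ in (0:ℝ)..s, (ε * r) ^ N * ((N:ℝ) * τ ^ (N - 1)))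
        = (ε * r) ^ N * s ^ N := by
      rw [intervalIntegral.integral_const_mul, intervalIntegral.integral_const_mul,
        integral_pow]
      have : N - 1 + 1 = N := Nat.succ_pred_eq_of_pos hN
      rw [this]
      field_simp
      rw [zero_pow (by omega), Nat.cast_sub hN, Nat.cast_one]; ring
    have hsN : s ^ N ≤ 1 := pow_le_one₀ hs0 hs1
    have hIle : I ≤ (ε * r) ^ N := by
      calc I ≤ (ε * r) ^ N * s ^ N := hmono.trans_eq hcalc
        _ ≤ (ε * r) ^ N * 1 := by
            apply mul_le_mul_of_nonneg_left hsN; positivity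
        _ = (ε * r) ^ N := by ring
    have hbase : 0 ≤ lam * I := mul_nonneg hlam.le hInonneg
    rw [Real.norm_eq_abs, abs_of_nonneg (Real.rpow_nonneg hbase _)]
    have h1 : (lam * I) ^ ((N:ℝ)⁻¹) ≤ (lam * (ε * r) ^ N) ^ ((N:ℝ)⁻¹) :=
      Real.rpow_le_rpow hbase (mul_le_mul_of_nonneg_left hIle hlam.le)
        (by positivity)
    have h2 : (lam * (ε * r) ^ N) ^ ((N:ℝ)⁻¹) = lam ^ ((N:ℝ)⁻¹) * (ε * r) := by
      rw [Real.mul_rpow hlam.le (by positivity), ← Real.rpow_natCast (ε * r) N,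
        ← Real.rpow_mul (by positivity), mul_inv_cancel₀ (ne_of_gt hNpos),
        Real.rpow_one]
    rw [h2] at h1
    calc (lam * I) ^ ((N:ℝ)⁻¹) ≤ lam ^ ((N:ℝ)⁻¹) * (ε * r) := h1
      _ = C := by rw [hC]; ring
  have := intervalIntegral.norm_integral_le_of_norm_le_const key
  simp only [Tcomp, Real.norm_eq_abs] at this ⊢
  calc |∫ s in t..1, (lam * ∫ τ in (0:ℝ)..s, (N:ℝ) * τ ^ (N - 1) * h (w τ)) ^ ((N:ℝ)⁻¹)|
      ≤ C * |1 - t| := this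
    _ ≤ C * 1 := by
        apply mul_le_mul_of_nonneg_left _ hC0
        rw [abs_of_nonneg (by linarith [ht.2])]
        linarith [ht.1]
    _ = C := by ring

/-- Lemma 6: with `f̂(t) = max{f(v) : 0 ≤ v ≤ t}` and `ĝ(t) = max{g(v) : 0 ≤ v ≤ t}`,
if `f̂(r) ≤ (εr)^N` and `ĝ(r) ≤ (εr)^N`, then for every `(v₁,v₂) ∈ K` with
`‖(v₁,v₂)‖ = r` one has `‖T_λ(v₁,v₂)‖ ≤ 2 ε λ^{1/N} ‖(v₁,v₂)‖`. -/
theorem operator_upper_estimate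
    (N : ℕ) (hN : 1 ≤ N) (f g : ℝ → ℝ)
    (hfc : ContinuousOn f (Ici 0)) (hgc : ContinuousOn g (Ici 0))
    (hfnn : ∀ x, 0 ≤ x → 0 ≤ f x) (hgnn : ∀ x, 0 ≤ x → 0 ≤ g x)
    (lam : ℝ) (hlam : 0 < lam)
    (r ε : ℝ) (hr : 0 < r) (hε : 0 < ε)
    (hfhat : sSup (f '' Icc (0:ℝ) r) ≤ (ε * r) ^ N)
    (hghat : sSup (g '' Icc (0:ℝ) r) ≤ (ε * r) ^ N)
    (v₁ v₂ : ℝ → ℝ) (hK : InCone v₁ v₂)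
    (hnorm : supNorm v₁ + supNorm v₂ = r) :
    supNorm (Tcomp N lam f v₂) + supNorm (Tcomp N lam g v₁) ≤
      2 * ε * lam ^ ((N:ℝ)⁻¹) * (supNorm v₁ + supNorm v₂) := by
  obtain ⟨hc1, hc2, hn1, hn2, -, -⟩ := hK
  have h10 : 0 ≤ supNorm v₁ := supNorm_nonneg v₁ hc1
  have h20 : 0 ≤ supNorm v₂ := supNorm_nonneg v₂ hc2
  have hle1 : ∀ t ∈ Icc (0:ℝ) 1, v₁ t ≤ r := fun t ht => by
    have := le_supNorm v₁ hc1 ht; linarith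
  have hle2 : ∀ t ∈ Icc (0:ℝ) 1, v₂ t ≤ r := fun t ht => by
    have := le_supNorm v₂ hc2 ht; linarith
  have b1 := Tcomp_supNorm_le N hN f v₂ hc2 hn2 hfc hfnn lam hlam r ε hr hε hfhat hle2
  have b2 := Tcomp_supNorm_le N hN g v₁ hc1 hn1 hgc hgnn lam hlam r ε hr hε hghat hle1
  rw [hnorm]
  linarith
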